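/- If W satisfies the Markov chain Y – X – W and I(X;Y|W)=0, then for every pair (x,w) with p(x,w)>0 we have p(y|w)=p(y|x) for all y; consequently W* = g(W) almost surely, where g(w) = p(Y|w) and W* = p(Y|X). That is, any sufficient representation determines the minimal sufficient statistic. -/
import Mathlib


open Real Finset

noncomputable section

variable {X Y W : Type*} [Fintype X] [Fintype Y] [Fintype W]

/-- Marginal `p(x)` of a joint pmf on `X × Y × W`. -/
def pX (p : X → Y → W → ℝ) (x : X) : ℝ := ∑ y, ∑ w, p x y w

/-- Marginal `p(y)`. -/
def pY (p : X → Y → W → ℝ) (y : Y) : ℝ := ∑ x, ∑ w, p x y w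

/-- Marginal `p(w)`. -/
def pW (p : X → Y → W → ℝ) (w : W) : ℝ := ∑ x, ∑ y, p x y w

/-- Marginal `p(x,y)`. -/
def pXY (p : X → Y → W → ℝ) (x : X) (y : Y) : ℝ := ∑ w, p x y w

/-- Marginal `p(x,w)`. -/
def pXW (p : X → Y → W → ℝ) (x : X) (w : W) : ℝ := ∑ y, p x y w

/-- Marginal `p(y,w)`. -/
def pYW (p : X → Y → W → ℝ) (y : Y) (w : W) : ℝ := ∑ x, p x y w

/-- Conditional `p(y|x)`. -/
def condYX (p : X → Y → W → ℝ) (x : X) (y : Y) : ℝ := pXY p x y / pX p x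

/-- Conditional `p(y|w)` (the decoder distribution). -/
def condYW (p : X → Y → W → ℝ) (w : W) (y : Y) : ℝ := pYW p y w / pW p w

/-- `p` is a probability mass function on `X × Y × W`. -/
def IsJoint (p : X → Y → W → ℝ) : Prop :=
  (∀ x y w, 0 ≤ p x y w) ∧ ∑ x, ∑ y, ∑ w, p x y w = 1

/-- The Markov chain `Y – X – W`: `p(w|x,y) = p(w|x)` whenever `p(x,y) > 0`. -/
def Markov (p : X → Y → W → ℝ) : Prop :=
  ∀ x y w, 0 < pXY p x y → p x y w / pXY p x y = pXW p x w / pX p x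

/-- Conditional entropy `H(Y|X)` (natural log). -/
def HYgX (p : X → Y → W → ℝ) : ℝ := -∑ x, ∑ y, pXY p x y * log (condYX p x y)

/-- Conditional entropy `H(Y|W)`. -/
def HYgW (p : X → Y → W → ℝ) : ℝ := -∑ w, ∑ y, pYW p y w * log (condYW p w y)

/-- Conditional mutual information `I(X;Y|W)`. -/
def IXYgW (p : X → Y → W → ℝ) : ℝ :=
  ∑ x, ∑ y, ∑ w, p x y w * log (p x y w * pW p w / (pXW p x w * pYW p y w))

/-- Conditional mutual information `I(X;W|Y)`. -/
def IXWgY (p : X → Y → W → ℝ) : ℝ :=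
  ∑ x, ∑ y, ∑ w, p x y w * log (p x y w * pY p y / (pXY p x y * pYW p y w))

/-- Mutual information `I(X;Y)`. -/
def IXY (p : X → Y → W → ℝ) : ℝ :=
  ∑ x, ∑ y, pXY p x y * log (pXY p x y / (pX p x * pY p y))

/-- Mutual information `I(W;Y)`. -/
def IWY (p : X → Y → W → ℝ) : ℝ :=
  ∑ y, ∑ w, pYW p y w * log (pYW p y w / (pY p y * pW p w))

/-- Mutual information `I(X;W)`. -/
def IXW (p : X → Y → W → ℝ) : ℝ :=
  ∑ x, ∑ w, pXW p x w * log (pXW p x w / (pX p x * pW p w))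

/-- Kullback–Leibler divergence between pmfs on `Y` (natural log). -/
def klD (q r : Y → ℝ) : ℝ := ∑ y, q y * log (q y / r y)


/-! ### Auxiliary lemmas -/

section Aux

lemma gibbs_pt (a b : ℝ) (ha : 0 ≤ a) (hb : 0 ≤ b) (hab : 0 < a → 0 < b) :
    a - b ≤ a * log (a / b) := by
  rcases ha.eq_or_lt with h | h
  · simp [← h]; linarith
  · have hb' := hab h
    have hlog : Real.log (b / a) ≤ b / a - 1 :=
      Real.log_le_sub_one_of_pos (by positivity)
    have hinv : Real.log (a / b) = - Real.log (b / a) := by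
      rw [Real.log_div h.ne' hb'.ne', Real.log_div hb'.ne' h.ne']; ring
    have hcan : a * (b / a) = b := by field_simp
    nlinarith [mul_le_mul_of_nonneg_left hlog h.le]

lemma gibbs_pt_eq (a b : ℝ) (ha : 0 ≤ a) (hb : 0 ≤ b) (hab : 0 < a → 0 < b)
    (heq : a * log (a / b) = a - b) : a = b := by
  rcases ha.eq_or_lt with h | h
  · simp [← h] at heq ⊢; linarith
  · have hb' := hab h
    by_contra hne
    have h1 : b / a ≠ 1 := by
      intro hh
      exact hne (by field_simp at hh; linarith)
    have hlog : Real.log (b / a) < b / a - 1 :=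
      Real.log_lt_sub_one_of_pos (by positivity) h1
    have hinv : Real.log (a / b) = - Real.log (b / a) := by
      rw [Real.log_div h.ne' hb'.ne', Real.log_div hb'.ne' h.ne']; ring
    have hcan : a * (b / a) = b := by field_simp
    nlinarith [mul_lt_mul_of_pos_left hlog h]

lemma triple_eq_zero {f : X → Y → W → ℝ} (h0 : ∀ x y w, 0 ≤ f x y w)
    (hs : ∑ x, ∑ y, ∑ w, f x y w = 0) : ∀ x y w, f x y w = 0 := by
  intro x y w
  have h1 : ∀ x ∈ (univ : Finset X), 0 ≤ ∑ y, ∑ w, f x y w :=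
    fun x _ => Finset.sum_nonneg fun y _ => Finset.sum_nonneg fun w _ => h0 x y w
  have h2 := (Finset.sum_eq_zero_iff_of_nonneg h1).mp hs x (Finset.mem_univ x)
  have h3 := (Finset.sum_eq_zero_iff_of_nonneg
    (fun y _ => Finset.sum_nonneg fun w _ => h0 x y w)).mp h2 y (Finset.mem_univ y)
  exact (Finset.sum_eq_zero_iff_of_nonneg (fun w _ => h0 x y w)).mp h3 w (Finset.mem_univ w)

lemma p_le_pXW (p : X → Y → W → ℝ) (h0 : ∀ x y w, 0 ≤ p x y w) (x : X) (y : Y) (w : W) :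
    p x y w ≤ pXW p x w :=
  Finset.single_le_sum (fun y _ => h0 x y w) (Finset.mem_univ y)

lemma p_le_pYW (p : X → Y → W → ℝ) (h0 : ∀ x y w, 0 ≤ p x y w) (x : X) (y : Y) (w : W) :
    p x y w ≤ pYW p y w :=
  Finset.single_le_sum (fun x _ => h0 x y w) (Finset.mem_univ x)

lemma p_le_pXY (p : X → Y → W → ℝ) (h0 : ∀ x y w, 0 ≤ p x y w) (x : X) (y : Y) (w : W) :
    p x y w ≤ pXY p x y :=
  Finset.single_le_sum (fun w _ => h0 x y w) (Finset.mem_univ w)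

lemma pXW_nonneg (p : X → Y → W → ℝ) (h0 : ∀ x y w, 0 ≤ p x y w) (x : X) (w : W) :
    0 ≤ pXW p x w := Finset.sum_nonneg fun y _ => h0 x y w

lemma pYW_nonneg (p : X → Y → W → ℝ) (h0 : ∀ x y w, 0 ≤ p x y w) (y : Y) (w : W) :
    0 ≤ pYW p y w := Finset.sum_nonneg fun x _ => h0 x y w

lemma pW_eq_sum_pXW (p : X → Y → W → ℝ) (w : W) : pW p w = ∑ x, pXW p x w := rfl

lemma pXW_le_pW (p : X → Y → W → ℝ) (h0 : ∀ x y w, 0 ≤ p x y w) (x : X) (w : W) :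
    pXW p x w ≤ pW p w := by
  rw [pW_eq_sum_pXW]
  exact Finset.single_le_sum (fun x _ => pXW_nonneg p h0 x w) (Finset.mem_univ x)

lemma pX_eq_sum_pXW (p : X → Y → W → ℝ) (x : X) : pX p x = ∑ w, pXW p x w := by
  rw [pX, Finset.sum_comm]; rfl

lemma pXW_le_pX (p : X → Y → W → ℝ) (h0 : ∀ x y w, 0 ≤ p x y w) (x : X) (w : W) :
    pXW p x w ≤ pX p x := by
  rw [pX_eq_sum_pXW]
  exact Finset.single_le_sum (fun w _ => pXW_nonneg p h0 x w) (Finset.mem_univ w)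

lemma pW_eq_sum_pYW (p : X → Y → W → ℝ) (w : W) : pW p w = ∑ y, pYW p y w := by
  rw [pW, Finset.sum_comm]; rfl

/-- Conditional independence of `X` and `Y` given `W`, from `I(X;Y|W) = 0`. -/
lemma cond_indep (p : X → Y → W → ℝ) (hp : IsJoint p) (hsuff : IXYgW p = 0) :
    ∀ x y w, p x y w * pW p w = pXW p x w * pYW p y w := by
  obtain ⟨h0, h1⟩ := hp
  set b : X → Y → W → ℝ := fun x y w => pXW p x w * pYW p y w / pW p w with hbdef
  have hbn : ∀ x y w, 0 ≤ b x y w := fun x y w =>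
    div_nonneg (mul_nonneg (pXW_nonneg p h0 x w) (pYW_nonneg p h0 y w))
      ((pXW_nonneg p h0 x w).trans (pXW_le_pW p h0 x w))
  have hbpos : ∀ x y w, 0 < p x y w → 0 < b x y w := by
    intro x y w hpv
    have hXW : 0 < pXW p x w := lt_of_lt_of_le hpv (p_le_pXW p h0 x y w)
    have hYW : 0 < pYW p y w := lt_of_lt_of_le hpv (p_le_pYW p h0 x y w)
    have hW : 0 < pW p w := lt_of_lt_of_le hXW (pXW_le_pW p h0 x w)
    exact div_pos (mul_pos hXW hYW) hW
  have hterm : ∀ x y w,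
      p x y w * log (p x y w * pW p w / (pXW p x w * pYW p y w))
        = p x y w * log (p x y w / b x y w) := by
    intro x y w
    simp only [hbdef]
    rw [div_div_eq_mul_div]
  have hWsum : ∑ w, pW p w = 1 := by
    rw [← h1]
    simp only [pW]
    calc ∑ w, ∑ x, ∑ y, p x y w
        = ∑ x, ∑ w, ∑ y, p x y w := Finset.sum_comm
      _ = ∑ x, ∑ y, ∑ w, p x y w := Finset.sum_congr rfl fun x _ => Finset.sum_comm
  have hbsum : ∑ x, ∑ y, ∑ w, b x y w = 1 := by
    have hswap : ∑ x, ∑ y, ∑ w, b x y w = ∑ w, ∑ x, ∑ y, b x y w := by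
      calc ∑ x, ∑ y, ∑ w, b x y w
          = ∑ x, ∑ w, ∑ y, b x y w := Finset.sum_congr rfl fun x _ => Finset.sum_comm
        _ = ∑ w, ∑ x, ∑ y, b x y w := Finset.sum_comm
    have hinner : ∀ w, ∑ x, ∑ y, b x y w = pW p w := by
      intro w
      have hc : ∑ x, ∑ y, b x y w
          = (∑ x, pXW p x w) * ((∑ y, pYW p y w) / pW p w) := by
        rw [Finset.sum_mul]
        refine Finset.sum_congr rfl fun x _ => ?_
        rw [Finset.sum_div, Finset.mul_sum]
        exact Finset.sum_congr rfl fun y _ => (mul_div_assoc _ _ _)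
      rw [hc, ← pW_eq_sum_pXW, ← pW_eq_sum_pYW]
      rcases eq_or_ne (pW p w) 0 with h | h
      · simp [h]
      · rw [div_self h, mul_one]
    rw [hswap, Finset.sum_congr rfl fun w _ => hinner w, hWsum]
  have hT : ∑ x, ∑ y, ∑ w, p x y w * log (p x y w / b x y w) = 0 := by
    rw [← hsuff, IXYgW]
    exact Finset.sum_congr rfl fun x _ => Finset.sum_congr rfl fun y _ =>
      Finset.sum_congr rfl fun w _ => (hterm x y w).symm
  have hsum0 : ∑ x, ∑ y, ∑ w,
      (p x y w * log (p x y w / b x y w) - (p x y w - b x y w)) = 0 := by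
    simp only [Finset.sum_sub_distrib]
    rw [hT, h1, hbsum]; ring
  have hle : ∀ x y w,
      0 ≤ p x y w * log (p x y w / b x y w) - (p x y w - b x y w) := fun x y w =>
    sub_nonneg.mpr (gibbs_pt _ _ (h0 x y w) (hbn x y w) (hbpos x y w))
  have heq := triple_eq_zero hle hsum0
  intro x y w
  have hpb : p x y w = b x y w :=
    gibbs_pt_eq _ _ (h0 x y w) (hbn x y w) (hbpos x y w) (by have := heq x y w; linarith)
  rcases eq_or_ne (pW p w) 0 with hw | hw
  · have hXW0 : pXW p x w = 0 :=
      le_antisymm (hw ▸ pXW_le_pW p h0 x w) (pXW_nonneg p h0 x w)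
    rw [hw, hXW0]; ring
  · rw [hpb]
    simp only [hbdef]
    exact div_mul_cancel₀ _ hw

end Aux

/-- if `Y – X – W` is a Markov chain and `I(X;Y|W) = 0`, then
`p(y|w) = p(y|x)` for every pair `(x,w)` with `p(x,w) > 0`; consequently
`W* = g(W)` almost surely, where `g(w) = p(Y|w)` and `W* = p(Y|X)`. -/
theorem sufficiency_determines_minimal_sufficient_statistic
    (p : X → Y → W → ℝ) (hp : IsJoint p) (hm : Markov p) (hsuff : IXYgW p = 0) :
    (∀ x w, 0 < pXW p x w → ∀ y, condYW p w y = condYX p x y) ∧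
    (∀ x w, 0 < pXW p x w → condYW p w = condYX p x) := by
  have h0 := hp.1
  have hCI := cond_indep p hp hsuff
  have main : ∀ x w, 0 < pXW p x w → ∀ y, condYW p w y = condYX p x y := by
    intro x w hxw y
    have hW : 0 < pW p w := lt_of_lt_of_le hxw (pXW_le_pW p h0 x w)
    have hX : 0 < pX p x := lt_of_lt_of_le hxw (pXW_le_pX p h0 x w)
    have hMk : p x y w * pX p x = pXY p x y * pXW p x w := by
      have hpxy : (0:ℝ) ≤ pXY p x y := Finset.sum_nonneg fun w _ => h0 x y w
      rcases hpxy.eq_or_lt with hxy | hxy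
      · have hp0 : p x y w = 0 :=
          le_antisymm (hxy ▸ p_le_pXY p h0 x y w) (h0 x y w)
        rw [hp0, ← hxy]; ring
      · have hmm := hm x y w hxy
        rw [div_eq_div_iff hxy.ne' hX.ne'] at hmm
        linear_combination hmm
    have hkey : pXW p x w * (pYW p y w * pX p x) = pXW p x w * (pXY p x y * pW p w) := by
      linear_combination pW p w * hMk - pX p x * hCI x y w
    have hkey2 := mul_left_cancel₀ (ne_of_gt hxw) hkey
    rw [condYW, condYX, div_eq_div_iff (ne_of_gt hW) (ne_of_gt hX)]
    linarith [hkey2]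
  exact ⟨main, fun x w hxw => funext fun y => main x w hxw y⟩
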